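/- Let n = 2ᵏpᵐ where p is an odd prime and k, m ≥ 1. Then the subgroups H₁ = ⟨x^{2^{k−1}pᵐ}⟩, K₁ = ⟨x^{2^{k−1}pᵐ}, y⟩, H₂ = ⟨y⟩, K₂ = ⟨x^{2ᵏ}, y⟩, H₃ = ⟨x^{2ᵏ}⟩ and K₃ = ⟨x⟩ form a crown of order 6 in the subgroup lattice of the dihedral group D_{2n} = ⟨x, y ∣ xⁿ = y² = 1, yxy = x⁻¹⟩; in particular, L(D_{2n}) is not dismantlable. -/

import Mathlib

open DihedralGroup Subgroup
open DihedralGroup Subgroup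

variable {n : ℕ}

lemma r_pow (d : ZMod n) (t : ℕ) : (r d) ^ t = r (t • d) := by
  induction t with
  | zero => simp
  | succ t ih => rw [pow_succ, ih]; show r _ = _; rw [add_nsmul, one_nsmul]

lemma r_zpow (d : ZMod n) (t : ℤ) : (r d) ^ t = r (t • d) := by
  cases t with
  | ofNat t => simpa using _root_.r_pow d t
  | negSucc t =>
      rw [zpow_negSucc, _root_.r_pow, negSucc_zsmul]
      rfl

/-- The subgroup of `DihedralGroup n` of all `r c, sr c` with `c` a multiple of `d`. -/
def dk (d : ZMod n) : Subgroup (DihedralGroup n) where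
  carrier := {g | ∃ c ∈ AddSubgroup.zmultiples d, g = r c ∨ g = sr c}
  one_mem' := ⟨0, zero_mem _, Or.inl rfl⟩
  mul_mem' := by
    rintro _ _ ⟨a, ha, rfl | rfl⟩ ⟨b, hb, rfl | rfl⟩
    · exact ⟨a + b, add_mem ha hb, Or.inl rfl⟩
    · exact ⟨b - a, sub_mem hb ha, Or.inr rfl⟩
    · exact ⟨a + b, add_mem ha hb, Or.inr rfl⟩
    · exact ⟨b - a, sub_mem hb ha, Or.inl rfl⟩
  inv_mem' := by
    rintro _ ⟨a, ha, rfl | rfl⟩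
    · exact ⟨-a, neg_mem ha, Or.inl rfl⟩
    · exact ⟨a, ha, Or.inr rfl⟩

/-- Rotations subgroup generated by `r d`. -/
def hk (d : ZMod n) : Subgroup (DihedralGroup n) where
  carrier := {g | ∃ c ∈ AddSubgroup.zmultiples d, g = r c}
  one_mem' := ⟨0, zero_mem _, rfl⟩
  mul_mem' := by
    rintro _ _ ⟨a, ha, rfl⟩ ⟨b, hb, rfl⟩
    exact ⟨a + b, add_mem ha hb, rfl⟩
  inv_mem' := by
    rintro _ ⟨a, ha, rfl⟩
    exact ⟨-a, neg_mem ha, rfl⟩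

lemma closure_pair_eq (d : ZMod n) : closure {r d, sr 0} = dk d := by
  apply le_antisymm
  · rw [closure_le]
    rintro g (rfl | rfl)
    · exact ⟨d, AddSubgroup.mem_zmultiples d, Or.inl rfl⟩
    · exact ⟨0, zero_mem _, Or.inr rfl⟩
  · rintro g ⟨c, hc, rfl | rfl⟩ <;>
      obtain ⟨t, rfl⟩ := AddSubgroup.mem_zmultiples_iff.mp hc
    · rw [← _root_.r_zpow]
      exact zpow_mem (subset_closure (by simp)) t
    · have : (sr (t • d) : DihedralGroup n) = sr 0 * r (t • d) := by
        show _ = sr (0 + t • d); rw [zero_add]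
      rw [this, ← _root_.r_zpow]
      exact mul_mem (subset_closure (by simp)) (zpow_mem (subset_closure (by simp)) t)

lemma closure_single_eq (d : ZMod n) : closure {r d} = hk d := by
  apply le_antisymm
  · rw [closure_le]
    rintro g rfl
    exact ⟨d, AddSubgroup.mem_zmultiples d, rfl⟩
  · rintro g ⟨c, hc, rfl⟩
    obtain ⟨t, rfl⟩ := AddSubgroup.mem_zmultiples_iff.mp hc
    rw [← _root_.r_zpow]
    exact zpow_mem (subset_closure (Set.mem_singleton _)) t

lemma mem_zmult_iff {N D C : ℕ} (hD : D ∣ N) :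
    ((C : ZMod N) ∈ AddSubgroup.zmultiples ((D : ℕ) : ZMod N)) ↔ D ∣ C := by
  rw [AddSubgroup.mem_zmultiples_iff]
  constructor
  · rintro ⟨t, ht⟩
    have h1 : ((t * D : ℤ) : ZMod N) = ((C : ℤ) : ZMod N) := by
      push_cast
      rw [← ht]; push_cast [zsmul_eq_mul]; ring
    rw [ZMod.intCast_eq_intCast_iff, Int.ModEq] at h1
    have h2 : (D : ℤ) ∣ (N : ℤ) := Int.natCast_dvd_natCast.mpr hD
    have h4 : (N:ℤ) ∣ (t * D - C) := Int.ModEq.dvd (Int.ModEq.symm h1)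
    have h3 : (D : ℤ) ∣ (C : ℤ) := by
      have h5 := dvd_sub (dvd_mul_left (D:ℤ) t) (h2.trans h4)
      simpa using h5
    exact_mod_cast h3
  · rintro ⟨u, rfl⟩
    exact ⟨u, by push_cast [zsmul_eq_mul]; ring⟩

lemma r_mem_dk {N D C : ℕ} (hD : D ∣ N) :
    r ((C : ℕ) : ZMod N) ∈ dk ((D : ℕ) : ZMod N) ↔ D ∣ C := by
  constructor
  · rintro ⟨c, hc, h | h⟩
    · obtain rfl : (C : ZMod N) = c := by simpa using h
      exact (mem_zmult_iff hD).mp hc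
    · simp at h
  · intro h
    exact ⟨C, (mem_zmult_iff hD).mpr h, Or.inl rfl⟩

lemma r_mem_hk {N D C : ℕ} (hD : D ∣ N) :
    r ((C : ℕ) : ZMod N) ∈ hk ((D : ℕ) : ZMod N) ↔ D ∣ C := by
  constructor
  · rintro ⟨c, hc, h⟩
    obtain rfl : (C : ZMod N) = c := by simpa using h
    exact (mem_zmult_iff hD).mp hc
  · intro h
    exact ⟨C, (mem_zmult_iff hD).mpr h, rfl⟩

lemma sr_not_mem_hk {N : ℕ} (c d : ZMod N) : sr c ∉ hk d := by
  rintro ⟨a, _, h⟩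
  simp at h

lemma sr_mem_dk {N D C : ℕ} (hD : D ∣ N) :
    sr ((C : ℕ) : ZMod N) ∈ dk ((D : ℕ) : ZMod N) ↔ D ∣ C := by
  constructor
  · rintro ⟨c, hc, h | h⟩
    · simp at h
    · obtain rfl : (C : ZMod N) = c := by simpa using h
      exact (mem_zmult_iff hD).mp hc
  · intro h
    exact ⟨C, (mem_zmult_iff hD).mpr h, Or.inr rfl⟩


/-- A finite lattice `L` with `n` elements is *dismantlable* if there is a chain
`L₁ ⊆ L₂ ⊆ ... ⊆ Lₙ = L` of sublattices of `L` with `|Lᵢ| = i` for `i = 1, ..., n`. -/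
def Dismantlable (L : Type*) [Lattice L] [Finite L] : Prop :=
  ∃ c : ℕ → Set L,
    (∀ i, 1 ≤ i → i ≤ Nat.card L → IsSublattice (c i) ∧ Nat.card (c i) = i) ∧
    (∀ i, 1 ≤ i → i < Nat.card L → c i ⊆ c (i + 1)) ∧
    c (Nat.card L) = Set.univ

/-- `x 0, y 0, x 1, y 1, ..., x (n-1), y (n-1)` form a *crown of order `2n`* (for `n ≥ 3`)
in a poset: the `2n` elements are pairwise distinct, and the only comparability relations
among them are `x i ≤ y i` and `x (i+1) ≤ y i` (indices mod `n`). -/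
def IsCrown {P : Type*} [PartialOrder P] {n : ℕ} (x y : Fin n → P) : Prop :=
  3 ≤ n ∧ Function.Injective x ∧ Function.Injective y ∧
  (∀ i j, x i ≠ y j) ∧
  (∀ i j, x i ≤ x j → i = j) ∧
  (∀ i j, y i ≤ y j → i = j) ∧
  (∀ i j, ¬ y i ≤ x j) ∧
  (∀ i j, x i ≤ y j ↔ (i = j ∨ (i : ℕ) = ((j : ℕ) + 1) % n))

section Crown

variable {P : Type*} [PartialOrder P] {n : ℕ}

lemma isCrown_of {x y : Fin n → P} (h3 : 3 ≤ n)
    (h5 : ∀ i j, x i ≤ x j → i = j) (h6 : ∀ i j, y i ≤ y j → i = j)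
    (h7 : ∀ i j, ¬ y i ≤ x j)
    (h8 : ∀ i j, x i ≤ y j ↔ (i = j ∨ (i : ℕ) = ((j : ℕ) + 1) % n)) :
    IsCrown x y :=
  ⟨h3, fun i j hij => h5 i j (le_of_eq hij), fun i j hij => h6 i j (le_of_eq hij),
    fun i j hq => h7 j i (le_of_eq hq.symm), h5, h6, h7, h8⟩

section FinFacts
variable [NeZero n] (h3 : 3 ≤ n)
include h3

lemma fin_val_one : ((1 : Fin n) : ℕ) = 1 := by
  rw [Fin.val_one']; exact Nat.mod_eq_of_lt (by omega)

lemma fin_coe_succ_iff (i j : Fin n) : ((i : ℕ) = ((j : ℕ) + 1) % n) ↔ i = j + 1 := by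
  rw [Fin.ext_iff, Fin.add_def, fin_val_one h3]

lemma fin_sub_one_ne (j : Fin n) : j - 1 ≠ j := by
  intro h
  have h1 : (1 : Fin n) = 0 := sub_eq_self.mp h
  have := fin_val_one h3
  rw [h1] at this
  simp at this

lemma fin_add_one_ne (j : Fin n) : j + 1 ≠ j := by
  intro h
  have h1 : (1 : Fin n) = 0 := by
    have := left_eq_add.mp h.symm
    exact this
  have := fin_val_one h3
  rw [h1] at this
  simp at this

lemma fin_sub_ne_add (j : Fin n) : j - 1 ≠ j + 1 := by
  intro h
  have h2 : (1 + 1 : Fin n) = 0 := by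
    have h1 : j = j + (1 + 1) := by
      rw [← add_assoc]
      exact (sub_eq_iff_eq_add.mp h)
    exact (left_eq_add.mp h1)
  have hv : ((1 + 1 : Fin n) : ℕ) = 2 := by
    rw [Fin.add_def, fin_val_one h3]
    exact Nat.mod_eq_of_lt (by omega)
  rw [h2] at hv
  simp at hv

end FinFacts

end Crown

section Step

variable {L : Type*} [Lattice L] {n : ℕ}

lemma crown_step {x y : Fin n → L} (h : IsCrown x y) {s : Set L} {w : L}
    (hst : ∀ v, v ∈ s ↔ (v ≠ w ∧ (v ∈ s ∨ v = w)))
    (hsub : IsSublattice s)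
    (hx : ∀ j, x j ∈ s ∨ x j = w) (hy : ∀ j, y j ∈ s ∨ y j = w) :
    ∃ x' y' : Fin n → L, IsCrown x' y' ∧ (∀ j, x' j ∈ s) ∧ (∀ j, y' j ∈ s) := by
  obtain ⟨h3, hxinj, hyinj, hne, h5, h6, h7, h8⟩ := h
  haveI : NeZero n := ⟨by omega⟩
  have hmem : ∀ v : L, v ∈ s ∨ v = w → v ≠ w → v ∈ s := by
    intro v hv hvw
    exact (hst v).mpr ⟨hvw, hv⟩
  have hnotw : ∀ v : L, v ∈ s → v ≠ w := fun v hv => ((hst v).mp hv).1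
  by_cases hwx : ∃ j0, x j0 = w
  · -- the removed element is some x j0
    obtain ⟨j0, hj0⟩ := hwx
    set jm := j0 - 1 with hjm
    have hjeq : jm + 1 = j0 := sub_add_cancel j0 1
    have hjne : jm ≠ j0 := fin_sub_one_ne h3 j0
    have hcoe : ∀ l : Fin n, ((j0 : ℕ) = ((l : ℕ) + 1) % n) ↔ l = jm := by
      intro l
      rw [fin_coe_succ_iff h3]
      constructor
      · intro hq; rw [hjm, hq]; exact (add_sub_cancel_right l 1).symm
      · rintro rfl; exact hjeq.symm
    have hys : ∀ l, y l ∈ s := by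
      intro l
      exact hmem _ (hy l) (fun hq => hne j0 l (by rw [hj0, hq]))
    have hxs : ∀ l, l ≠ j0 → x l ∈ s := by
      intro l hl
      exact hmem _ (hx l) (fun hq => hl (hxinj (hq.trans hj0.symm)))
    set z := y jm ⊓ y j0 with hz
    have hz0 : z ≤ y j0 := inf_le_right
    have hzm : z ≤ y jm := inf_le_left
    have hxz : x j0 ≤ z :=
      le_inf ((h8 j0 jm).mpr (Or.inr ((hcoe jm).mpr rfl)))
        ((h8 j0 j0).mpr (Or.inl rfl))
    have hzs : z ∈ s := hsub.infClosed (hys jm) (hys j0)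
    have hznw : z ≠ x j0 := by rw [hj0]; exact hnotw _ hzs
    set x' := Function.update x j0 z with hx'
    have hx'j0 : x' j0 = z := Function.update_self j0 z x
    have hx'l : ∀ l, l ≠ j0 → x' l = x l := fun l hl => Function.update_of_ne hl z x
    -- key facts
    have K1 : ∀ l, z ≤ y l ↔ (l = j0 ∨ l = jm) := by
      intro l
      constructor
      · intro hq
        rcases (h8 j0 l).mp (le_trans hxz hq) with hq1 | hq1
        · exact Or.inl hq1.symm
        · exact Or.inr ((hcoe l).mp hq1)
      · rintro (rfl | rfl)
        · exact hz0
        · exact hzm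
    have K2 : ∀ l, ¬ y l ≤ z := by
      intro l hq
      exact hjne ((h6 l jm (le_trans hq hzm)) ▸ (h6 l j0 (le_trans hq hz0)) ▸ rfl)
    have K3 : ∀ l, ¬ z ≤ x l := by
      intro l hq
      have h1 : j0 = l := h5 j0 l (le_trans hxz hq)
      subst h1
      exact hznw (le_antisymm hq hxz)
    have K4 : ∀ l, l ≠ j0 → ¬ x l ≤ z := by
      intro l hl hq
      have h1 : l = jm := by
        rcases (h8 l jm).mp (le_trans hq hzm) with hq1 | hq1
        · exact hq1
        · exact absurd ((fin_coe_succ_iff h3 l jm).mp hq1 |>.trans hjeq) hl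
      have h2 : l = j0 + 1 := by
        rcases (h8 l j0).mp (le_trans hq hz0) with hq1 | hq1
        · exact absurd hq1 hl
        · exact (fin_coe_succ_iff h3 l j0).mp hq1
      exact fin_sub_ne_add h3 j0 (h1.symm.trans h2)
    have h5' : ∀ i j, x' i ≤ x' j → i = j := by
      intro i j hq
      by_cases hi : i = j0 <;> by_cases hj : j = j0
      · rw [hi, hj]
      · subst hi; rw [hx'j0, hx'l j hj] at hq; exact absurd hq (K3 j)
      · subst hj; rw [hx'j0, hx'l i hi] at hq; exact absurd hq (K4 i hi)
      · rw [hx'l i hi, hx'l j hj] at hq; exact h5 i j hq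
    have h7' : ∀ i j, ¬ y i ≤ x' j := by
      intro i j hq
      by_cases hj : j = j0
      · subst hj; rw [hx'j0] at hq; exact K2 i hq
      · rw [hx'l j hj] at hq; exact h7 i j hq
    have h8' : ∀ i j, x' i ≤ y j ↔ (i = j ∨ (i : ℕ) = ((j : ℕ) + 1) % n) := by
      intro i j
      by_cases hi : i = j0
      · subst hi
        rw [hx'j0, K1 j]
        constructor
        · rintro (rfl | rfl)
          · exact Or.inl rfl
          · exact Or.inr ((hcoe jm).mpr rfl)
        · rintro (rfl | hq)
          · exact Or.inl rfl
          · exact Or.inr ((hcoe j).mp hq)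
      · rw [hx'l i hi]; exact h8 i j
    refine ⟨x', y, isCrown_of h3 h5' h6 h7' h8', ?_, hys⟩
    intro j
    by_cases hj : j = j0
    · subst hj; rw [hx'j0]; exact hzs
    · rw [hx'l j hj]; exact hxs j hj
  · by_cases hwy : ∃ j0, y j0 = w
    · -- the removed element is some y j0
      obtain ⟨j0, hj0⟩ := hwy
      set jp := j0 + 1 with hjp
      have hjne : jp ≠ j0 := fin_add_one_ne h3 j0
      have hxs : ∀ l, x l ∈ s := by
        intro l
        exact hmem _ (hx l) (fun hq => hne l j0 (by rw [hj0, hq]))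
      have hys : ∀ l, l ≠ j0 → y l ∈ s := by
        intro l hl
        exact hmem _ (hy l) (fun hq => hl (hyinj (hq.trans hj0.symm)))
      set z := x j0 ⊔ x jp with hz
      have hz0 : x j0 ≤ z := le_sup_left
      have hzp : x jp ≤ z := le_sup_right
      have hzy : z ≤ y j0 :=
        sup_le ((h8 j0 j0).mpr (Or.inl rfl))
          ((h8 jp j0).mpr (Or.inr ((fin_coe_succ_iff h3 jp j0).mpr rfl)))
      have hzs : z ∈ s := hsub.supClosed (hxs j0) (hxs jp)
      have hznw : z ≠ y j0 := by rw [hj0]; exact hnotw _ hzs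
      set y' := Function.update y j0 z with hy'
      have hy'j0 : y' j0 = z := Function.update_self j0 z y
      have hy'l : ∀ l, l ≠ j0 → y' l = y l := fun l hl => Function.update_of_ne hl z y
      have K1 : ∀ l, x l ≤ z ↔ (l = j0 ∨ l = jp) := by
        intro l
        constructor
        · intro hq
          rcases (h8 l j0).mp (le_trans hq hzy) with hq1 | hq1
          · exact Or.inl hq1
          · exact Or.inr ((fin_coe_succ_iff h3 l j0).mp hq1)
        · rintro (rfl | rfl)
          · exact hz0
          · exact hzp
      have K2 : ∀ l, ¬ z ≤ x l := by
        intro l hq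
        have h1 : j0 = l := h5 j0 l (le_trans hz0 hq)
        subst h1
        have h2 : z = x j0 := le_antisymm hq hz0
        exact hjne (h5 jp j0 (h2 ▸ hzp))
      have K3 : ∀ l, l ≠ j0 → ¬ z ≤ y l := by
        intro l hl hq
        have h1 : l = j0 - 1 := by
          rcases (h8 j0 l).mp (le_trans hz0 hq) with hq1 | hq1
          · exact absurd hq1.symm hl
          · rw [(fin_coe_succ_iff h3 j0 l).mp hq1]; exact (add_sub_cancel_right l 1).symm
        have h2 : l = j0 + 1 := by
          rcases (h8 jp l).mp (le_trans hzp hq) with hq1 | hq1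
          · exact hq1.symm
          · have h9 := (fin_coe_succ_iff h3 jp l).mp hq1
            have h10 : l + 1 = j0 + 1 := by rw [← h9, hjp]
            exact absurd (add_right_cancel h10) hl
        exact fin_sub_ne_add h3 j0 (h1.symm.trans h2)
      have K4 : ∀ l, ¬ y l ≤ z := by
        intro l hq
        have h1 : l = j0 := h6 l j0 (le_trans hq hzy)
        subst h1
        exact hznw (le_antisymm hzy hq)
      have h6' : ∀ i j, y' i ≤ y' j → i = j := by
        intro i j hq
        by_cases hi : i = j0 <;> by_cases hj : j = j0
        · rw [hi, hj]
        · subst hi; rw [hy'j0, hy'l j hj] at hq; exact absurd hq (K3 j hj)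
        · subst hj; rw [hy'j0, hy'l i hi] at hq; exact absurd hq (K4 i)
        · rw [hy'l i hi, hy'l j hj] at hq; exact h6 i j hq
      have h7' : ∀ i j, ¬ y' i ≤ x j := by
        intro i j hq
        by_cases hi : i = j0
        · subst hi; rw [hy'j0] at hq; exact K2 j hq
        · rw [hy'l i hi] at hq; exact h7 i j hq
      have h8' : ∀ i j, x i ≤ y' j ↔ (i = j ∨ (i : ℕ) = ((j : ℕ) + 1) % n) := by
        intro i j
        by_cases hj : j = j0
        · rw [hj, hy'j0, K1 i]
          constructor
          · rintro (rfl | rfl)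
            · exact Or.inl rfl
            · exact Or.inr ((fin_coe_succ_iff h3 jp j0).mpr rfl)
          · rintro (rfl | hq)
            · exact Or.inl rfl
            · exact Or.inr ((fin_coe_succ_iff h3 i j0).mp hq)
        · rw [hy'l j hj]; exact h8 i j
      refine ⟨x, y', isCrown_of h3 h5 h6' h7' h8', hxs, ?_⟩
      intro j
      by_cases hj : j = j0
      · subst hj; rw [hy'j0]; exact hzs
      · rw [hy'l j hj]; exact hys j hj
    · -- w is not a crown element
      push_neg at hwx hwy
      exact ⟨x, y, ⟨h3, hxinj, hyinj, hne, h5, h6, h7, h8⟩,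
        fun j => hmem _ (hx j) (hwx j), fun j => hmem _ (hy j) (hwy j)⟩

end Step

lemma not_dismantlable_of_isCrown {L : Type*} [Lattice L] [Finite L] {n : ℕ}
    {x y : Fin n → L} (h : IsCrown x y) : ¬ Dismantlable L := by
  rintro ⟨c, hcard, hchain, ctop⟩
  have h3 := h.1
  have i0 : Fin n := ⟨0, by omega⟩
  haveI : Nonempty L := ⟨x i0⟩
  set N := Nat.card L with hNdef
  have hN : 1 ≤ N := Nat.card_pos
  have main : ∀ d, d ≤ N - 1 → ∃ x' y' : Fin n → L, IsCrown x' y' ∧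
      (∀ j, x' j ∈ c (N - d)) ∧ (∀ j, y' j ∈ c (N - d)) := by
    intro d
    induction d with
    | zero =>
        intro _
        refine ⟨x, y, h, ?_, ?_⟩ <;> intro j <;>
          simp only [Nat.sub_zero, ctop, Set.mem_univ]
    | succ d ih =>
        intro hd
        obtain ⟨x', y', hcr, hx', hy'⟩ := ih (by omega)
        have h1 : 1 ≤ N - (d + 1) := by omega
        have h2 : N - (d + 1) < N := by omega
        have heq : N - d = N - (d + 1) + 1 := by omega
        set i := N - (d + 1) with hidef
        have hsubl := (hcard i h1 h2.le).1
        have hci : Nat.card (c i) = i := (hcard i h1 h2.le).2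
        have hci1 : Nat.card (c (i + 1)) = i + 1 := (hcard (i + 1) (by omega) (by omega)).2
        have hss : c i ⊆ c (i + 1) := hchain i h1 h2
        obtain ⟨w, hw⟩ : ∃ w, c (i + 1) \ c i = {w} := by
        
          rw [← Set.ncard_eq_one, Set.ncard_diff hss (Set.toFinite _),
            ← Nat.card_coe_set_eq, ← Nat.card_coe_set_eq, hci, hci1]
          omega
        have hwmem : w ∈ c (i + 1) \ c i := by rw [hw]; exact Set.mem_singleton w
        have hdec : ∀ v, v ∈ c (i + 1) → v ∈ c i ∨ v = w := by
          intro v hv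
          by_cases hvci : v ∈ c i
          · exact Or.inl hvci
          · right
            have : v ∈ c (i + 1) \ c i := ⟨hv, hvci⟩
            rw [hw] at this
            exact this
        have hst : ∀ v, v ∈ c i ↔ (v ≠ w ∧ (v ∈ c i ∨ v = w)) := by
          intro v
          constructor
          · intro hv
            refine ⟨?_, Or.inl hv⟩
            rintro rfl
            exact hwmem.2 hv
          · rintro ⟨hvw, hv | rfl⟩
            · exact hv
            · exact absurd rfl hvw
        rw [heq] at hx' hy'
        obtain ⟨x'', y'', hcr', hx'', hy''⟩ :=
          crown_step hcr hst hsubl (fun j => hdec _ (hx' j)) (fun j => hdec _ (hy' j))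
        exact ⟨x'', y'', hcr', hx'', hy''⟩
  obtain ⟨x', y', hcr, hx', hy'⟩ := main (N - 1) le_rfl
  have h1 : N - (N - 1) = 1 := by omega
  rw [h1] at hx' hy'
  have hc1 : Nat.card (c 1) = 1 := (hcard 1 le_rfl hN).2
  obtain ⟨a, ha⟩ : ∃ a, c 1 = {a} := by
    rw [← Set.ncard_eq_one, ← Nat.card_coe_set_eq]
    exact hc1
  have e1 : x' i0 = a := by have := hx' i0; rw [ha] at this; exact this
  have e2 : y' i0 = a := by have := hy' i0; rw [ha] at this; exact this
  exact hcr.2.2.2.1 i0 i0 (e1.trans e2.symm)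

section Main
variable {N : ℕ}

lemma sr0_mem_dk (d : ZMod N) : sr 0 ∈ dk d := ⟨0, zero_mem _, Or.inr rfl⟩

lemma zmult_anti {D D' : ℕ} (h : D' ∣ D) :
    AddSubgroup.zmultiples ((D : ℕ) : ZMod N) ≤ AddSubgroup.zmultiples ((D' : ℕ) : ZMod N) := by
  rw [AddSubgroup.zmultiples_le]
  obtain ⟨u, rfl⟩ := h
  exact ⟨u, by push_cast [zsmul_eq_mul]; ring⟩

lemma hk_le_hk {D D' : ℕ} (h : D' ∣ D) : hk ((D:ℕ) : ZMod N) ≤ hk ((D':ℕ) : ZMod N) := by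
  rintro g ⟨c, hc, rfl⟩
  exact ⟨c, zmult_anti h hc, rfl⟩

lemma hk_le_dk {D D' : ℕ} (h : D' ∣ D) : hk ((D:ℕ) : ZMod N) ≤ dk ((D':ℕ) : ZMod N) := by
  rintro g ⟨c, hc, rfl⟩
  exact ⟨c, zmult_anti h hc, Or.inl rfl⟩

lemma dk_le_dk {D D' : ℕ} (h : D' ∣ D) : dk ((D:ℕ) : ZMod N) ≤ dk ((D':ℕ) : ZMod N) := by
  rintro g ⟨c, hc, hg⟩
  exact ⟨c, zmult_anti h hc, hg⟩

lemma closure_sr0_eq [NeZero N] : closure {sr (0 : ZMod N)} = dk ((N : ℕ) : ZMod N) := by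
  apply le_antisymm
  · rw [closure_le]
    rintro g rfl
    exact sr0_mem_dk _
  · rintro g ⟨c, hc, hg⟩
    have hc0 : c = 0 := by
      obtain ⟨t, rfl⟩ := AddSubgroup.mem_zmultiples_iff.mp hc
      rw [ZMod.natCast_self, smul_zero]
    rcases hg with rfl | rfl
    · rw [hc0]; exact one_mem _
    · rw [hc0]; exact subset_closure (Set.mem_singleton _)

theorem crown_dihedral {n a b : ℕ} [NeZero n] (han : a ∣ n) (hbn : b ∣ n)
    (hba : ¬ b ∣ a) (hab : ¬ a ∣ b) (ha1 : ¬ a ∣ 1) (hb1 : ¬ b ∣ 1)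
    (hna : ¬ n ∣ a) (hnb : ¬ n ∣ b) (hn1 : ¬ n ∣ 1) :
    IsCrown
      (![Subgroup.closure {DihedralGroup.r ((a : ℕ) : ZMod n)},
         Subgroup.closure {DihedralGroup.sr 0},
         Subgroup.closure {DihedralGroup.r ((b : ℕ) : ZMod n)}] :
        Fin 3 → Subgroup (DihedralGroup n))
      ![Subgroup.closure {DihedralGroup.r ((a : ℕ) : ZMod n), DihedralGroup.sr 0},
        Subgroup.closure {DihedralGroup.r ((b : ℕ) : ZMod n), DihedralGroup.sr 0},
        Subgroup.closure {DihedralGroup.r ((1 : ℕ) : ZMod n)}] := by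
  have h1n : 1 ∣ n := one_dvd n
  rw [closure_single_eq, closure_single_eq, closure_single_eq, closure_pair_eq,
    closure_pair_eq, closure_sr0_eq]
  -- memberships
  have mra_ha : r ((a : ℕ) : ZMod n) ∈ hk ((a:ℕ) : ZMod n) := (r_mem_hk han).mpr dvd_rfl
  have mrb_hb : r ((b : ℕ) : ZMod n) ∈ hk ((b:ℕ) : ZMod n) := (r_mem_hk hbn).mpr dvd_rfl
  have mr1_h1 : r ((1 : ℕ) : ZMod n) ∈ hk ((1:ℕ) : ZMod n) := (r_mem_hk h1n).mpr dvd_rfl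
  have msr : ∀ d : ZMod n, sr 0 ∈ dk d := sr0_mem_dk
  have mra_da : r ((a : ℕ) : ZMod n) ∈ dk ((a:ℕ) : ZMod n) := (r_mem_dk han).mpr dvd_rfl
  have mrb_db : r ((b : ℕ) : ZMod n) ∈ dk ((b:ℕ) : ZMod n) := (r_mem_dk hbn).mpr dvd_rfl
  apply isCrown_of (by norm_num)
  · intro i j
    fin_cases i <;> fin_cases j <;>
      simp only [Matrix.cons_val_zero, Matrix.cons_val_one, Matrix.head_cons, Fin.mk_zero,
        Fin.mk_one, Matrix.cons_val_two, Matrix.tail_cons] <;> intro hle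
    · trivial
    · exact absurd ((r_mem_dk dvd_rfl).mp (hle mra_ha)) hna
    · exact absurd ((r_mem_hk hbn).mp (hle mra_ha)) hba
    · exact absurd (hle (msr _)) (sr_not_mem_hk _ _)
    · trivial
    · exact absurd (hle (msr _)) (sr_not_mem_hk _ _)
    · exact absurd ((r_mem_hk han).mp (hle mrb_hb)) hab
    · exact absurd ((r_mem_dk dvd_rfl).mp (hle mrb_hb)) hnb
    · trivial
  · intro i j
    fin_cases i <;> fin_cases j <;>
      simp only [Matrix.cons_val_zero, Matrix.cons_val_one, Matrix.head_cons, Fin.mk_zero,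
        Fin.mk_one, Matrix.cons_val_two, Matrix.tail_cons] <;> intro hle
    · trivial
    · exact absurd ((r_mem_dk hbn).mp (hle mra_da)) hba
    · exact absurd (hle (msr _)) (sr_not_mem_hk _ _)
    · exact absurd ((r_mem_dk han).mp (hle mrb_db)) hab
    · trivial
    · exact absurd (hle (msr _)) (sr_not_mem_hk _ _)
    · exact absurd ((r_mem_dk han).mp (hle mr1_h1)) ha1
    · exact absurd ((r_mem_dk hbn).mp (hle mr1_h1)) hb1
    · trivial
  · intro i j
    fin_cases i <;> fin_cases j <;>
      simp only [Matrix.cons_val_zero, Matrix.cons_val_one, Matrix.head_cons, Fin.mk_zero,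
        Fin.mk_one, Matrix.cons_val_two, Matrix.tail_cons] <;> intro hle
    · exact absurd (hle (msr _)) (sr_not_mem_hk _ _)
    · exact absurd ((r_mem_dk dvd_rfl).mp (hle mra_da)) hna
    · exact absurd (hle (msr _)) (sr_not_mem_hk _ _)
    · exact absurd (hle (msr _)) (sr_not_mem_hk _ _)
    · exact absurd ((r_mem_dk dvd_rfl).mp (hle mrb_db)) hnb
    · exact absurd (hle (msr _)) (sr_not_mem_hk _ _)
    · exact absurd ((r_mem_hk han).mp (hle mr1_h1)) ha1
    · exact absurd ((r_mem_dk dvd_rfl).mp (hle mr1_h1)) hn1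
    · exact absurd ((r_mem_hk hbn).mp (hle mr1_h1)) hb1
  · intro i j
    fin_cases i <;> fin_cases j <;>
      simp only [Matrix.cons_val_zero, Matrix.cons_val_one, Matrix.head_cons, Fin.mk_zero,
        Fin.mk_one, Matrix.cons_val_two, Matrix.tail_cons]
    · exact iff_of_true (hk_le_dk dvd_rfl) (by decide)
    · refine iff_of_false ?_ (by decide)
      intro hle; exact absurd ((r_mem_dk hbn).mp (hle mra_ha)) hba
    · exact iff_of_true (hk_le_hk (one_dvd a)) (by decide)
    · exact iff_of_true (dk_le_dk han) (by decide)
    · exact iff_of_true (dk_le_dk hbn) (by decide)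
    · refine iff_of_false ?_ (by decide)
      intro hle; exact absurd (hle (msr _)) (sr_not_mem_hk _ _)
    · refine iff_of_false ?_ (by decide)
      intro hle; exact absurd ((r_mem_dk han).mp (hle mrb_hb)) hab
    · exact iff_of_true (hk_le_dk dvd_rfl) (by decide)
    · exact iff_of_true (hk_le_hk (one_dvd b)) (by decide)
end Main


/-- Let `n = 2 ^ k * p ^ m` with `p` an odd prime and `k, m ≥ 1`. Then in the dihedral
group `D_{2n}` (with rotation `x = r 1` and reflection `y = sr 0`) the subgroups
`H₁ = ⟨x^(2^(k-1) p^m)⟩`, `K₁ = ⟨x^(2^(k-1) p^m), y⟩`, `H₂ = ⟨y⟩`, `K₂ = ⟨x^(2^k), y⟩`,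
`H₃ = ⟨x^(2^k)⟩`, `K₃ = ⟨x⟩` form a crown of order 6 in the subgroup lattice;
in particular that lattice is not dismantlable. -/
theorem stmt18 (k m p : ℕ) (hp : p.Prime) (hodd : Odd p) (hk : 1 ≤ k) (hm : 1 ≤ m) :
    haveI : NeZero (2 ^ k * p ^ m) := ⟨Nat.mul_ne_zero (pow_ne_zero k two_ne_zero) (pow_ne_zero m hp.ne_zero)⟩
    IsCrown
      (![Subgroup.closure {DihedralGroup.r ((2 ^ (k - 1) * p ^ m : ℕ) :
            ZMod (2 ^ k * p ^ m))},
         Subgroup.closure {DihedralGroup.sr 0},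
         Subgroup.closure {DihedralGroup.r ((2 ^ k : ℕ) : ZMod (2 ^ k * p ^ m))}] :
        Fin 3 → Subgroup (DihedralGroup (2 ^ k * p ^ m)))
      ![Subgroup.closure {DihedralGroup.r ((2 ^ (k - 1) * p ^ m : ℕ) :
            ZMod (2 ^ k * p ^ m)), DihedralGroup.sr 0},
        Subgroup.closure {DihedralGroup.r ((2 ^ k : ℕ) : ZMod (2 ^ k * p ^ m)),
          DihedralGroup.sr 0},
        Subgroup.closure {DihedralGroup.r ((1 : ℕ) : ZMod (2 ^ k * p ^ m))}] ∧
    ¬ Dismantlable (Subgroup (DihedralGroup (2 ^ k * p ^ m))) := by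
  haveI : NeZero (2 ^ k * p ^ m) :=
    ⟨Nat.mul_ne_zero (pow_ne_zero k two_ne_zero) (pow_ne_zero m hp.ne_zero)⟩
  have hpne2 : p ≠ 2 := by rintro rfl; simp [Nat.odd_iff] at hodd
  have hp3 : 3 ≤ p := by have := hp.two_le; omega
  have hpm3 : 3 ≤ p ^ m := le_trans hp3 (Nat.le_self_pow (by omega) p)
  have hkpos : 0 < 2 ^ (k - 1) := pow_pos (by norm_num) _
  have hapos : 0 < 2 ^ (k - 1) * p ^ m := Nat.mul_pos hkpos (pow_pos hp.pos m)
  have hbpos : 0 < 2 ^ k := pow_pos (by norm_num) _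
  have h2k : 2 ^ k = 2 * 2 ^ (k - 1) := by
    conv_lhs => rw [← Nat.sub_add_cancel hk]
    rw [pow_succ]; ring
  have hn2a : 2 ^ k * p ^ m = 2 * (2 ^ (k - 1) * p ^ m) := by rw [h2k, mul_assoc]
  have han : 2 ^ (k - 1) * p ^ m ∣ 2 ^ k * p ^ m :=
    Nat.mul_dvd_mul (pow_dvd_pow 2 (by omega)) dvd_rfl
  have hbn : 2 ^ k ∣ 2 ^ k * p ^ m := dvd_mul_right _ _
  have hba : ¬ 2 ^ k ∣ 2 ^ (k - 1) * p ^ m := by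
    intro hdvd
    have h2 : 2 ^ (k - 1) * 2 ∣ 2 ^ (k - 1) * p ^ m := by
      rw [mul_comm (2 ^ (k-1)) 2, ← h2k]; exact hdvd
    have h3 : 2 ∣ p ^ m := (Nat.mul_dvd_mul_iff_left hkpos).mp h2
    have h4 : 2 ∣ p := Nat.Prime.dvd_of_dvd_pow Nat.prime_two h3
    rw [Nat.odd_iff] at hodd
    omega
  have hab : ¬ 2 ^ (k - 1) * p ^ m ∣ 2 ^ k := by
    intro hdvd
    have hpa : p ∣ 2 ^ (k - 1) * p ^ m :=
      dvd_mul_of_dvd_right (dvd_pow_self p (by omega)) _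
    have h4 : p ∣ 2 := hp.dvd_of_dvd_pow (hpa.trans hdvd)
    have := Nat.le_of_dvd (by norm_num) h4
    omega
  have ha1 : ¬ 2 ^ (k - 1) * p ^ m ∣ 1 := by
    intro hdvd
    have := Nat.le_of_dvd (by norm_num) hdvd
    have h5 : p ^ m ≤ 2 ^ (k - 1) * p ^ m := Nat.le_mul_of_pos_left _ hkpos
    omega
  have hb1 : ¬ 2 ^ k ∣ 1 := by
    intro hdvd
    have := Nat.le_of_dvd (by norm_num) hdvd
    have h5 : 2 ≤ 2 ^ k := by calc 2 = 2 ^ 1 := rfl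
                                   _ ≤ 2 ^ k := Nat.pow_le_pow_right (by norm_num) hk
    omega
  have hb3 : 3 * 2 ^ k ≤ 2 ^ k * p ^ m := by
    calc 3 * 2 ^ k = 2 ^ k * 3 := by ring
    _ ≤ 2 ^ k * p ^ m := Nat.mul_le_mul_left _ hpm3
  have hna : ¬ 2 ^ k * p ^ m ∣ 2 ^ (k - 1) * p ^ m := by
    intro hdvd
    have := Nat.le_of_dvd hapos hdvd
    omega
  have hnb : ¬ 2 ^ k * p ^ m ∣ 2 ^ k := by
    intro hdvd
    have := Nat.le_of_dvd hbpos hdvd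
    omega
  have hn1 : ¬ 2 ^ k * p ^ m ∣ 1 := by
    intro hdvd
    have := Nat.le_of_dvd (by norm_num) hdvd
    omega
  have hcrown := crown_dihedral (n := 2 ^ k * p ^ m) han hbn hba hab ha1 hb1 hna hnb hn1
  exact ⟨hcrown, not_dismantlable_of_isCrown hcrown⟩
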